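/- Let $d_1$ and $d_2$ be independent exponentially distributed random variables with rate $\lambda_v > 0$. Fix $x \ge 0$ (the user–BS horizontal distance) and $r_s \ge 0$ (the BS–RIS distance), and assume $0 < h_v < h_b < h_s$. Define the blockage events $E_b = \{d_1 < x h_v/h_b\}$ and $E_s = \{d_2 < (r_s - x) h_v/h_s\}$ if $x \le r_s$, while $E_s = \{d_1 < (x - r_s) h_v/h_s\}$ if $x > r_s$. Then $\mathbb{P}(E_b \cap E_s) = (1 - e^{-\lambda_v x h_v/h_b})(1 - e^{-\lambda_v (r_s - x) h_v/h_s})$ when $0 \le x \le r_s$, and $\mathbb{P}(E_b \cap E_s) = 1 - e^{-\lambda_v (x - r_s) h_v/h_s}$ when $x > r_s$. -/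

import Mathlib

open MeasureTheory ProbabilityTheory Real Set

lemma expMeasure_Iio {r : ℝ} (hr : 0 < r) (a : ℝ) :
    expMeasure r (Iio a) = ENNReal.ofReal (if 0 ≤ a then 1 - exp (-(r * a)) else 0) := by
  rw [expMeasure, gammaMeasure, withDensity_apply _ measurableSet_Iio]
  have h1 : ∫⁻ y in Iio a, gammaPDF 1 r y = ∫⁻ y in Iic a, exponentialPDF r y := by
    rw [setLIntegral_congr Iio_ae_eq_Iic]; rfl
  rw [h1, lintegral_exponentialPDF_eq_antiDeriv hr]

/-- **Joint blockage probability (Lemma 2).**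
`d₁, d₂` are independent exponential random variables with rate `λv` (modeled by the
product of two exponential measures on `ℝ × ℝ`).  With user–BS distance `x ≥ 0`,
BS–RIS distance `rs ≥ 0` and heights `0 < hv < hb < hs`, the blockage events are
`Eb = {d₁ < x·hv/hb}` and `Es = {d₂ < (rs − x)·hv/hs}` if `x ≤ rs`, while
`Es = {d₁ < (x − rs)·hv/hs}` if `x > rs`.  Then the probability of the joint event
`Eb ∩ Es` is as given in the paper. -/
theorem joint_blockage_probability
    (lv hv hb hs x rs : ℝ)
    (hlv : 0 < lv) (hx : 0 ≤ x) (hrs : 0 ≤ rs)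
    (hhv : 0 < hv) (hvb : hv < hb) (hbs : hb < hs)
    (μ : Measure (ℝ × ℝ))
    (hμ : μ = (expMeasure lv).prod (expMeasure lv))
    (Eb Es : Set (ℝ × ℝ))
    (hEb : Eb = {p : ℝ × ℝ | p.1 < x * hv / hb})
    (hEs : Es = if x ≤ rs then {p : ℝ × ℝ | p.2 < (rs - x) * hv / hs}
                else {p : ℝ × ℝ | p.1 < (x - rs) * hv / hs}) :
    μ (Eb ∩ Es) = ENNReal.ofReal
      (if x ≤ rs then
        (1 - exp (-(lv * (x * hv / hb)))) * (1 - exp (-(lv * ((rs - x) * hv / hs))))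
      else
        1 - exp (-(lv * ((x - rs) * hv / hs)))) := by
  have hb0 : 0 < hb := hhv.trans hvb
  have hs0 : 0 < hs := hb0.trans hbs
  have hprob : IsProbabilityMeasure (expMeasure lv) := isProbabilityMeasure_expMeasure hlv
  subst hμ hEb
  by_cases hc : x ≤ rs
  · rw [if_pos hc] at hEs
    subst hEs
    have ha : 0 ≤ x * hv / hb := by positivity
    have hbnn : 0 ≤ (rs - x) * hv / hs := by
      apply div_nonneg _ hs0.le; exact mul_nonneg (by linarith) hhv.le
    have hset : {p : ℝ × ℝ | p.1 < x * hv / hb} ∩ {p : ℝ × ℝ | p.2 < (rs - x) * hv / hs}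
        = (Iio (x * hv / hb)) ×ˢ (Iio ((rs - x) * hv / hs)) := by
      ext p; simp [Set.mem_prod, and_comm]
    rw [hset, Measure.prod_prod, expMeasure_Iio hlv, expMeasure_Iio hlv,
      if_pos ha, if_pos hbnn, if_pos hc,
      ← ENNReal.ofReal_mul (by simp [exp_le_one_iff]; positivity)]
  · rw [if_neg hc] at hEs
    subst hEs
    push_neg at hc
    have hcle : (x - rs) * hv / hs ≤ x * hv / hb := by
      apply div_le_div₀ (by positivity) _ hb0 hbs.le
      exact mul_le_mul_of_nonneg_right (by linarith) hhv.le
    have hsub : {p : ℝ × ℝ | p.1 < (x - rs) * hv / hs} ⊆ {p : ℝ × ℝ | p.1 < x * hv / hb} :=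
      fun p hp => lt_of_lt_of_le hp hcle
    rw [Set.inter_eq_self_of_subset_right hsub]
    have hset : {p : ℝ × ℝ | p.1 < (x - rs) * hv / hs}
        = (Iio ((x - rs) * hv / hs)) ×ˢ (univ : Set ℝ) := by
      ext p; simp
    have hnn : 0 ≤ (x - rs) * hv / hs := by
      apply div_nonneg _ hs0.le; exact mul_nonneg (by linarith) hhv.le
    rw [hset, Measure.prod_prod, expMeasure_Iio hlv, if_pos hnn, measure_univ, mul_one,
      if_neg (not_le.mpr hc)]
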